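/- arXiv:2102.05564 — 4 statements merged into one kernel-verified Lean document; each statement's English description precedes it below -/
import Mathlib

section
/- There exists an absolute constant C ≥ 1 such that the following holds. Let P > 1, let 0 ≤ ε < 1/(C·P³), and let p₁, p₂, p₃ be distinct primes in [P, 2P] with ‖pᵢ·αⱼ − pⱼ·αᵢ‖ < ε for all i, j ∈ {1,2,3}, where α₁, α₂, α₃ ∈ ℝ/ℤ. If α ∈ ℝ/ℤ satisfies ‖p₁·α − α₁‖ < ε/(2p₂) and ‖p₂·α − α₂‖ < ε/(2p₁), then ‖p₃·α − α₃‖ ≤ C·ε/P. -/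
/-- Lemma 2.2 ("tg"): contagiousness of the phase relations. -/
theorem stmt_4 :
    ∃ C : ℝ, 1 ≤ C ∧
      ∀ (P ε : ℝ) (p₁ p₂ p₃ : ℕ) (α₁ α₂ α₃ α : UnitAddCircle),
        1 < P → 0 ≤ ε → ε < 1 / (C * P ^ 3) →
        p₁.Prime → p₂.Prime → p₃.Prime →
        p₁ ≠ p₂ → p₁ ≠ p₃ → p₂ ≠ p₃ →
        P ≤ p₁ → (p₁ : ℝ) ≤ 2 * P →
        P ≤ p₂ → (p₂ : ℝ) ≤ 2 * P →
        P ≤ p₃ → (p₃ : ℝ) ≤ 2 * P →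
        ‖p₁ • α₂ - p₂ • α₁‖ < ε →
        ‖p₁ • α₃ - p₃ • α₁‖ < ε →
        ‖p₂ • α₃ - p₃ • α₂‖ < ε →
        ‖p₁ • α - α₁‖ < ε / (2 * p₂) →
        ‖p₂ • α - α₂‖ < ε / (2 * p₁) →
        ‖p₃ • α - α₃‖ ≤ C * ε / P := by
  refine ⟨16, by norm_num, ?_⟩
  intro P ε p₁ p₂ p₃ α₁ α₂ α₃ α hP hε hεP hp1 hp2 hp3 h12 h13 h23
    hP1 hP1' hP2 hP2' hP3 hP3' hα12 hα13 hα23 hl1 hl2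
  have hP0 : (0:ℝ) < P := by linarith
  have hp1R : (1:ℝ) < p₁ := lt_of_lt_of_le hP hP1
  have hp2R : (1:ℝ) < p₂ := lt_of_lt_of_le hP hP2
  have hp3R : (1:ℝ) < p₃ := lt_of_lt_of_le hP hP3
  -- ε is positive (else hl1 is absurd)
  have hεpos : 0 < ε := by
    by_contra h
    push_neg at h
    have h1 : ε / (2 * (p₂:ℝ)) ≤ 0 := div_nonpos_of_nonpos_of_nonneg (by linarith) (by positivity)
    have := norm_nonneg (p₁ • α - α₁)
    linarith
  have hεP' : ε * (16 * P ^ 3) < 1 := by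
    have h16 : (0:ℝ) < 16 * P ^ 3 := by positivity
    calc ε * (16 * P ^ 3) < (1 / (16 * P ^ 3)) * (16 * P ^ 3) := by
          exact mul_lt_mul_of_pos_right hεP h16
      _ = 1 := by field_simp
  set β : UnitAddCircle := p₃ • α - α₃ with hβ
  -- the two key norm bounds
  have hb1 : ‖p₁ • β‖ < 2 * ε := by
    have e1 : p₁ • β = p₃ • (p₁ • α - α₁) - (p₁ • α₃ - p₃ • α₁) := by
      rw [hβ]
      simp only [smul_sub]
      rw [smul_comm p₃ p₁ α]
      abel
    calc ‖p₁ • β‖ = ‖p₃ • (p₁ • α - α₁) - (p₁ • α₃ - p₃ • α₁)‖ := by rw [e1]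
      _ ≤ ‖p₃ • (p₁ • α - α₁)‖ + ‖p₁ • α₃ - p₃ • α₁‖ := norm_sub_le _ _
      _ ≤ (p₃ : ℝ) * ‖p₁ • α - α₁‖ + ‖p₁ • α₃ - p₃ • α₁‖ := by
          gcongr; exact norm_nsmul_le
      _ < (p₃ : ℝ) * (ε / (2 * p₂)) + ε := by
          refine add_lt_add_of_lt_of_lt ?_ hα13
          exact mul_lt_mul_of_pos_left hl1 (by linarith)
      _ ≤ 2 * ε := by
          have h1 : (p₃ : ℝ) * (ε / (2 * p₂)) ≤ ε := by
            rw [mul_div_assoc', div_le_iff₀ (by linarith)]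
            nlinarith
          linarith
  have hb2 : ‖p₂ • β‖ < 2 * ε := by
    have e2 : p₂ • β = p₃ • (p₂ • α - α₂) - (p₂ • α₃ - p₃ • α₂) := by
      rw [hβ]
      simp only [smul_sub]
      rw [smul_comm p₃ p₂ α]
      abel
    calc ‖p₂ • β‖ = ‖p₃ • (p₂ • α - α₂) - (p₂ • α₃ - p₃ • α₂)‖ := by rw [e2]
      _ ≤ ‖p₃ • (p₂ • α - α₂)‖ + ‖p₂ • α₃ - p₃ • α₂‖ := norm_sub_le _ _
      _ ≤ (p₃ : ℝ) * ‖p₂ • α - α₂‖ + ‖p₂ • α₃ - p₃ • α₂‖ := by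
          gcongr; exact norm_nsmul_le
      _ < (p₃ : ℝ) * (ε / (2 * p₁)) + ε := by
          refine add_lt_add_of_lt_of_lt ?_ hα23
          exact mul_lt_mul_of_pos_left hl2 (by linarith)
      _ ≤ 2 * ε := by
          have h1 : (p₃ : ℝ) * (ε / (2 * p₁)) ≤ ε := by
            rw [mul_div_assoc', div_le_iff₀ (by linarith)]
            nlinarith
          linarith
  -- lift β to ℝ
  obtain ⟨x, hx⟩ : ∃ x : ℝ, (x : UnitAddCircle) = β := Quotient.exists_rep β
  set k₁ : ℤ := round ((p₁ : ℝ) * x) with hk₁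
  set k₂ : ℤ := round ((p₂ : ℝ) * x) with hk₂
  have hcoe1 : ((((p₁ : ℝ)) * x : ℝ) : UnitAddCircle) = p₁ • β := by
    rw [← hx, ← AddCircle.coe_nsmul, nsmul_eq_mul]
  have hcoe2 : ((((p₂ : ℝ)) * x : ℝ) : UnitAddCircle) = p₂ • β := by
    rw [← hx, ← AddCircle.coe_nsmul, nsmul_eq_mul]
  have h1 : |(p₁ : ℝ) * x - k₁| < 2 * ε := by
    rw [hk₁, ← UnitAddCircle.norm_eq, hcoe1]; exact hb1
  have h2 : |(p₂ : ℝ) * x - k₂| < 2 * ε := by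
    rw [hk₂, ← UnitAddCircle.norm_eq, hcoe2]; exact hb2
  -- the integer k₁ p₂ - k₂ p₁ vanishes
  have habs : |(k₁ : ℝ) * p₂ - (k₂ : ℝ) * p₁| < 1 := by
    have heq : (k₁ : ℝ) * p₂ - (k₂ : ℝ) * p₁ =
        (p₂ : ℝ) * -((p₁ : ℝ) * x - k₁) + (p₁ : ℝ) * ((p₂ : ℝ) * x - k₂) := by ring
    have h3 : |(k₁ : ℝ) * p₂ - (k₂ : ℝ) * p₁| ≤
        (p₂ : ℝ) * |(p₁ : ℝ) * x - k₁| + (p₁ : ℝ) * |(p₂ : ℝ) * x - k₂| := by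
      rw [heq]
      refine (abs_add_le _ _).trans ?_
      rw [abs_mul, abs_mul, abs_neg, Nat.abs_cast, Nat.abs_cast]
    have c1 : (p₂ : ℝ) * |(p₁ : ℝ) * x - k₁| ≤ (p₂ : ℝ) * (2 * ε) :=
      mul_le_mul_of_nonneg_left h1.le (by positivity)
    have c2 : (p₁ : ℝ) * |(p₂ : ℝ) * x - k₂| ≤ (p₁ : ℝ) * (2 * ε) :=
      mul_le_mul_of_nonneg_left h2.le (by positivity)
    have c3 : (p₂ : ℝ) * (2 * ε) ≤ 2 * P * (2 * ε) :=
      mul_le_mul_of_nonneg_right hP2' (by positivity)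
    have c4 : (p₁ : ℝ) * (2 * ε) ≤ 2 * P * (2 * ε) :=
      mul_le_mul_of_nonneg_right hP1' (by positivity)
    have hP2sq : (1 : ℝ) ≤ P ^ 2 := one_le_pow₀ hP.le
    have c5 : 8 * P * ε * 1 ≤ 8 * P * ε * P ^ 2 :=
      mul_le_mul_of_nonneg_left hP2sq (by positivity)
    have h5 : 8 * P * ε < 1 := by linarith [c5, hεP']
    linarith
  have hZ : k₁ * (p₂ : ℤ) = k₂ * (p₁ : ℤ) := by
    have : |k₁ * (p₂ : ℤ) - k₂ * (p₁ : ℤ)| < 1 := by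
      have : |((k₁ * (p₂ : ℤ) - k₂ * (p₁ : ℤ) : ℤ) : ℝ)| < 1 := by push_cast; exact habs
      exact_mod_cast this
    have h0 : k₁ * (p₂ : ℤ) - k₂ * (p₁ : ℤ) = 0 := Int.abs_lt_one_iff.mp this
    linarith
  -- p₁ divides k₁
  have hp1Z : Prime ((p₁ : ℕ) : ℤ) := Nat.prime_iff_prime_int.mp hp1
  have hdvd : ((p₁ : ℕ) : ℤ) ∣ k₁ := by
    have hmul : ((p₁ : ℕ) : ℤ) ∣ k₁ * (p₂ : ℤ) := ⟨k₂, by rw [hZ]; ring⟩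
    rcases hp1Z.dvd_mul.mp hmul with h | h
    · exact h
    · exfalso
      have : p₁ ∣ p₂ := Int.natCast_dvd_natCast.mp h
      exact h12 ((Nat.prime_dvd_prime_iff_eq hp1 hp2).mp this)
  obtain ⟨m, hm⟩ := hdvd
  -- final estimate
  have hxm : (p₁ : ℝ) * |x - m| < 2 * ε := by
    have hk : (k₁ : ℝ) = (p₁ : ℝ) * m := by exact_mod_cast hm
    have heq : (p₁ : ℝ) * |x - m| = |(p₁ : ℝ) * x - k₁| := by
      calc (p₁ : ℝ) * |x - m| = |(p₁ : ℝ)| * |x - m| := by rw [Nat.abs_cast]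
        _ = |(p₁ : ℝ) * (x - m)| := (abs_mul _ _).symm
        _ = |(p₁ : ℝ) * x - k₁| := by rw [hk]; ring_nf
    rw [heq]; exact h1
  have hnorm : ‖β‖ ≤ |x - m| := by
    rw [← hx, UnitAddCircle.norm_eq]
    exact round_le x m
  have hfin : |x - m| ≤ 2 * ε / P := by
    rw [le_div_iff₀ hP0]
    have := mul_le_mul_of_nonneg_right hP1 (abs_nonneg (x - m))
    linarith [this, hxm]
  calc ‖β‖ ≤ |x - m| := hnorm
    _ ≤ 2 * ε / P := hfin
    _ ≤ 16 * ε / P := by gcongr <;> linarith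
end

section
/- There exists an absolute constant C ≥ 1 such that the following holds. Let P > 1 and 0 ≤ ε < 1/(C·P⁴). Let p₁, p₂, q₁, q₂ be distinct primes in [P, 2P] and let α_{p₁}, α_{p₂}, α_{q₁}, α_{q₂} ∈ ℝ/ℤ satisfy ‖pᵢ·α_{qⱼ} − qⱼ·α_{pᵢ}‖ < ε for all i, j ∈ {1,2}. Then ‖p₁·α_{p₂} − p₂·α_{p₁}‖ ≤ C·ε. -/
set_option maxHeartbeats 1000000

lemma aux_q_bound (ε P : ℝ) (p₁ p₂ q : ℕ) (a b c : ℝ)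
    (hε : 0 ≤ ε) (hP : 0 < P)
    (hp₁ : (p₁ : ℝ) ≤ 2 * P) (hp₂ : (p₂ : ℝ) ≤ 2 * P)
    (h1 : ‖(((p₁ : ℝ) * c - (q : ℝ) * a : ℝ) : UnitAddCircle)‖ < ε)
    (h2 : ‖(((p₂ : ℝ) * c - (q : ℝ) * b : ℝ) : UnitAddCircle)‖ < ε) :
    ‖(((q : ℝ) * ((p₁ : ℝ) * b - (p₂ : ℝ) * a) : ℝ) : UnitAddCircle)‖ ≤ 4 * P * ε := by
  have key : (((q : ℝ) * ((p₁ : ℝ) * b - (p₂ : ℝ) * a) : ℝ) : UnitAddCircle)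
      = p₂ • (((p₁ : ℝ) * c - (q : ℝ) * a : ℝ) : UnitAddCircle)
        - p₁ • (((p₂ : ℝ) * c - (q : ℝ) * b : ℝ) : UnitAddCircle) := by
    rw [← AddCircle.coe_nsmul, ← AddCircle.coe_nsmul, ← AddCircle.coe_sub]
    congr 1
    simp only [nsmul_eq_mul]
    ring
  rw [key]
  have hb1 : ‖p₂ • (((p₁ : ℝ) * c - (q : ℝ) * a : ℝ) : UnitAddCircle)‖ ≤ (p₂ : ℝ) * ‖(((p₁ : ℝ) * c - (q : ℝ) * a : ℝ) : UnitAddCircle)‖ := norm_nsmul_le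
  have hb2 : ‖p₁ • (((p₂ : ℝ) * c - (q : ℝ) * b : ℝ) : UnitAddCircle)‖ ≤ (p₁ : ℝ) * ‖(((p₂ : ℝ) * c - (q : ℝ) * b : ℝ) : UnitAddCircle)‖ := norm_nsmul_le
  have hp₁0 : (0:ℝ) ≤ (p₁ : ℝ) := Nat.cast_nonneg _
  have hp₂0 : (0:ℝ) ≤ (p₂ : ℝ) := Nat.cast_nonneg _
  calc ‖_ - _‖ ≤ ‖p₂ • (((p₁ : ℝ) * c - (q : ℝ) * a : ℝ) : UnitAddCircle)‖
        + ‖p₁ • (((p₂ : ℝ) * c - (q : ℝ) * b : ℝ) : UnitAddCircle)‖ := norm_sub_le _ _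
    _ ≤ (p₂ : ℝ) * ε + (p₁ : ℝ) * ε :=
        add_le_add (hb1.trans (mul_le_mul_of_nonneg_left h1.le hp₂0))
          (hb2.trans (mul_le_mul_of_nonneg_left h2.le hp₁0))
    _ ≤ 2 * P * ε + 2 * P * ε := by gcongr
    _ = 4 * P * ε := by ring

/-- Lemma 2.3: two pairs of primes, each element of one pair compatible with each of
the other pair, forces compatibility within the first pair. -/
theorem stmt_6 :
    ∃ C : ℝ, 1 ≤ C ∧
      ∀ (P ε : ℝ) (p₁ p₂ q₁ q₂ : ℕ)
        (αp₁ αp₂ αq₁ αq₂ : UnitAddCircle),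
        1 < P → 0 ≤ ε → ε < 1 / (C * P ^ 4) →
        p₁.Prime → p₂.Prime → q₁.Prime → q₂.Prime →
        p₁ ≠ p₂ → p₁ ≠ q₁ → p₁ ≠ q₂ → p₂ ≠ q₁ → p₂ ≠ q₂ → q₁ ≠ q₂ →
        P ≤ p₁ → (p₁ : ℝ) ≤ 2 * P → P ≤ p₂ → (p₂ : ℝ) ≤ 2 * P →
        P ≤ q₁ → (q₁ : ℝ) ≤ 2 * P → P ≤ q₂ → (q₂ : ℝ) ≤ 2 * P →
        ‖p₁ • αq₁ - q₁ • αp₁‖ < ε →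
        ‖p₁ • αq₂ - q₂ • αp₁‖ < ε →
        ‖p₂ • αq₁ - q₁ • αp₂‖ < ε →
        ‖p₂ • αq₂ - q₂ • αp₂‖ < ε →
        ‖p₁ • αp₂ - p₂ • αp₁‖ ≤ C * ε := by
  refine ⟨32, by norm_num, ?_⟩
  intro P ε p₁ p₂ q₁ q₂ αp₁ αp₂ αq₁ αq₂ hP hε hεC hp₁ hp₂ hq₁ hq₂
    _ _ _ _ _ hq12 hPp₁ hp₁P hPp₂ hp₂P hPq₁ hq₁P hPq₂ hq₂P h11 h12 h21 h22
  obtain ⟨a, rfl⟩ := QuotientAddGroup.mk_surjective αp₁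
  obtain ⟨b, rfl⟩ := QuotientAddGroup.mk_surjective αp₂
  obtain ⟨c, rfl⟩ := QuotientAddGroup.mk_surjective αq₁
  obtain ⟨d, rfl⟩ := QuotientAddGroup.mk_surjective αq₂
  simp only [← AddCircle.coe_nsmul, nsmul_eq_mul, ← AddCircle.coe_sub] at h11 h12 h21 h22 ⊢
  have hP0 : (0:ℝ) < P := lt_trans one_pos hP
  obtain ⟨x, hx⟩ : ∃ x : ℝ, x = (p₁ : ℝ) * b - (p₂ : ℝ) * a := ⟨_, rfl⟩
  rw [show ((p₁ : ℝ) * b - (p₂ : ℝ) * a : ℝ) = x from hx.symm]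
  have hA1 : ‖(((q₁ : ℝ) * x : ℝ) : UnitAddCircle)‖ ≤ 4 * P * ε := by
    rw [hx]; exact aux_q_bound ε P p₁ p₂ q₁ a b c hε hP0 hp₁P hp₂P h11 h21
  have hA2 : ‖(((q₂ : ℝ) * x : ℝ) : UnitAddCircle)‖ ≤ 4 * P * ε := by
    rw [hx]; exact aux_q_bound ε P p₁ p₂ q₂ a b d hε hP0 hp₁P hp₂P h12 h22
  rw [UnitAddCircle.norm_eq] at hA1 hA2
  clear hx
  obtain ⟨k, hk⟩ : ∃ k : ℤ, (k : ℝ) = round ((q₁ : ℝ) * x) := ⟨_, rfl⟩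
  obtain ⟨l, hl⟩ : ∃ l : ℤ, (l : ℝ) = round ((q₂ : ℝ) * x) := ⟨_, rfl⟩
  rw [← hk] at hA1
  rw [← hl] at hA2
  clear hk hl
  have hεsmall : ε < 1 / (32 * P ^ 4) := hεC
  -- k * q₂ = l * q₁
  have hkl : k * (q₂ : ℤ) = l * (q₁ : ℤ) := by
    have hab : |((k * (q₂ : ℤ) - l * (q₁ : ℤ) : ℤ) : ℝ)| < 1 := by
      push_cast
      have hsplit : (k : ℝ) * q₂ - (l : ℝ) * q₁
          = (q₂ : ℝ) * ((k : ℝ) - (q₁ : ℝ) * x) + (q₁ : ℝ) * ((q₂ : ℝ) * x - (l : ℝ)) := by ring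
      rw [hsplit]
      have e1 : |(q₂ : ℝ) * ((k : ℝ) - (q₁ : ℝ) * x)| ≤ 2 * P * (4 * P * ε) := by
        rw [abs_mul, abs_sub_comm, abs_of_nonneg (Nat.cast_nonneg q₂ : (0:ℝ) ≤ q₂)]
        gcongr
      have e2 : |(q₁ : ℝ) * ((q₂ : ℝ) * x - (l : ℝ))| ≤ 2 * P * (4 * P * ε) := by
        rw [abs_mul, abs_of_nonneg (Nat.cast_nonneg q₁ : (0:ℝ) ≤ q₁)]
        gcongr
      have htri := abs_add_le ((q₂ : ℝ) * ((k : ℝ) - (q₁ : ℝ) * x))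
        ((q₁ : ℝ) * ((q₂ : ℝ) * x - (l : ℝ)))
      have h16 : 16 * P ^ 2 * ε < 1 := by
        have h1 : 16 * P ^ 2 * ε < 16 * P ^ 2 * (1 / (32 * P ^ 4)) :=
          mul_lt_mul_of_pos_left hεsmall (by positivity)
        have h2 : 16 * P ^ 2 * (1 / (32 * P ^ 4)) = 1 / (2 * P ^ 2) := by
          field_simp; ring
        have h3 : 1 / (2 * P ^ 2) < 1 := by
          rw [div_lt_one (by positivity)]
          nlinarith
        linarith
      nlinarith [htri, e1, e2]
    have habs : |(k * (q₂ : ℤ) - l * (q₁ : ℤ) : ℤ)| < 1 := by exact_mod_cast hab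
    have h0 : k * (q₂ : ℤ) - l * (q₁ : ℤ) = 0 := Int.abs_lt_one_iff.mp habs
    linarith [h0]
  -- q₁ divides k
  have hcop : IsCoprime ((q₁ : ℤ)) ((q₂ : ℤ)) :=
    Nat.Coprime.isCoprime ((Nat.coprime_primes hq₁ hq₂).mpr hq12)
  have hdvd : (q₁ : ℤ) ∣ k := by
    have h1 : (q₁ : ℤ) ∣ k * (q₂ : ℤ) := ⟨l, by linarith [hkl]⟩
    exact hcop.dvd_of_dvd_mul_right h1
  obtain ⟨m, hm⟩ := hdvd
  have hq₁0 : (0:ℝ) < (q₁ : ℝ) := lt_of_lt_of_le hP0 hPq₁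
  have hxm : |x - (m : ℝ)| ≤ 4 * ε := by
    have h1 : (q₁ : ℝ) * x - (k : ℝ) = (q₁ : ℝ) * (x - (m : ℝ)) := by
      rw [hm]; push_cast; ring
    rw [h1, abs_mul, abs_of_nonneg hq₁0.le] at hA1
    have h3 : P * |x - (m : ℝ)| ≤ (q₁ : ℝ) * |x - (m : ℝ)| :=
      mul_le_mul_of_nonneg_right hPq₁ (abs_nonneg _)
    have h4 : P * |x - (m : ℝ)| ≤ P * (4 * ε) := by linarith
    have := (mul_le_mul_iff_right₀ hP0).mp h4
    linarith
  -- conclude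
  have hzero : (((m : ℝ) : ℝ) : UnitAddCircle) = 0 := by
    rw [AddCircle.coe_eq_zero_iff]
    exact ⟨m, by simp⟩
  have hcoe : ((x : ℝ) : UnitAddCircle) = ((x - (m : ℝ) : ℝ) : UnitAddCircle) := by
    rw [AddCircle.coe_sub, hzero, sub_zero]
  have hsmall : |x - (m : ℝ)| < 1 / 2 := by
    have h4 : 4 * ε < 4 * (1 / (32 * P ^ 4)) := by
      linarith [mul_lt_mul_of_pos_left hεsmall (by norm_num : (0:ℝ) < 4)]
    have h8 : 4 * (1 / (32 * P ^ 4)) = 1 / (8 * P ^ 4) := by field_simp; ring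
    have hP4 : 1 ≤ P ^ 4 := by
      simpa using pow_le_pow_left₀ zero_le_one hP.le 4
    have h9 : 1 / (8 * P ^ 4) ≤ 1 / 2 := by
      apply one_div_le_one_div_of_le (by norm_num)
      linarith
    linarith
  have hfin : ‖((x : ℝ) : UnitAddCircle)‖ ≤ |x - (m : ℝ)| := by
    rw [hcoe, UnitAddCircle.norm_eq]
    have hr : round (x - (m : ℝ)) = 0 := by
      rw [round_eq_zero_iff, Set.mem_Ico]
      obtain ⟨h1, h2⟩ := abs_lt.mp hsmall
      exact ⟨by linarith, by linarith⟩
    rw [hr]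
    simp
  calc ‖((x : ℝ) : UnitAddCircle)‖ ≤ |x - (m : ℝ)| := hfin
    _ ≤ 4 * ε := hxm
    _ ≤ 32 * ε := by linarith
end

section
/- There exist absolute constants C ≥ 1 and c > 0 such that: let P > 1, 0 ≤ ε < 1/(C·P²), let S be a finite set of primes contained in [P, 2P], and for each p ∈ S let α_p ∈ ℝ/ℤ. Suppose the number of ordered pairs (p₁, p₂) ∈ S × S with ‖p₁·α_{p₂} − p₂·α_{p₁}‖ < ε is at least |S|²/C. Then there exists α ∈ ℝ/ℤ such that ‖p·α − α_p‖ ≤ C·ε/P for at least c·|S| primes p ∈ S. -/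
namespace Stmt8Aux

lemma norm_coe_le (x : ℝ) : ‖(x : UnitAddCircle)‖ ≤ |x| := by
  rw [UnitAddCircle.norm_eq]; simpa using round_le x 0

lemma coe_int (m : ℤ) : ((m : ℝ) : UnitAddCircle) = 0 := by
  rw [AddCircle.coe_eq_zero_iff]; exact ⟨m, by simp⟩

lemma coe_surj (x : UnitAddCircle) : ∃ t : ℝ, (t : UnitAddCircle) = x :=
  Quotient.exists_rep x

lemma nsmul_coe (n : ℕ) (t : ℝ) :
    n • ((t : ℝ) : UnitAddCircle) = ((n * t : ℝ) : UnitAddCircle) := by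
  rw [← AddCircle.coe_nsmul]; norm_num

lemma divisible (n : ℕ) (hn : 0 < n) (x : UnitAddCircle) : ∃ y, n • y = x := by
  obtain ⟨t, rfl⟩ := coe_surj x
  exact ⟨((t / n : ℝ) : UnitAddCircle), by
    rw [nsmul_coe, mul_div_cancel₀]; exact_mod_cast hn.ne'⟩

lemma approx (n : ℕ) (hn : 0 < n) (x : UnitAddCircle) (δ : ℝ) (h : ‖n • x‖ ≤ δ) :
    ∃ k : ℤ, ‖x - (((k : ℝ) / n : ℝ) : UnitAddCircle)‖ ≤ δ / n := by
  obtain ⟨t, rfl⟩ := coe_surj x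
  rw [nsmul_coe, UnitAddCircle.norm_eq] at h
  have hn' : (0:ℝ) < n := by exact_mod_cast hn
  refine ⟨round ((n : ℝ) * t), ?_⟩
  set k : ℤ := round ((n:ℝ)*t) with hk
  have e1 : ((t : ℝ) : UnitAddCircle) - (((k : ℝ) / n : ℝ) : UnitAddCircle)
      = ((t - (k : ℝ) / n : ℝ) : UnitAddCircle) := by
    rw [AddCircle.coe_sub]
  rw [e1]
  refine (norm_coe_le _).trans ?_
  have e2 : t - (k : ℝ) / n = ((n:ℝ)*t - k) / n := by field_simp
  rw [e2, abs_div, abs_of_pos hn']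
  gcongr

lemma rigid (m : ℤ) (n : ℕ) (hn : 0 < n)
    (h : ‖(((m:ℝ)/n : ℝ) : UnitAddCircle)‖ < 1/n) : (n:ℤ) ∣ m := by
  rw [UnitAddCircle.norm_eq] at h
  have hn' : (0:ℝ) < n := by exact_mod_cast hn
  set j := round ((m:ℝ)/n) with hj
  have e : (m:ℝ)/n - j = ((m:ℝ) - j*n)/n := by field_simp
  rw [e, abs_div, abs_of_pos hn', div_lt_div_iff₀ hn' hn', one_mul] at h
  have h2 : |(m:ℝ) - j * n| < 1 := by nlinarith [h, hn']
  have h3 : |m - j * (n:ℤ)| < 1 := by exact_mod_cast h2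
  have h4 : m = j * n := by rw [abs_lt] at h3; omega
  exact ⟨j, by rw [h4, mul_comm]⟩

/-- Two-prime rigidity: if both `‖r • z‖` and `‖s • z‖` are small for distinct primes
`r ≠ s`, then `‖z‖` is small. -/
lemma twoPrime (r s : ℕ) (hr : r.Prime) (hs : s.Prime) (hrs : r ≠ s)
    (z : UnitAddCircle) (δ₁ δ₂ : ℝ)
    (h1 : ‖r • z‖ ≤ δ₁) (h2 : ‖s • z‖ ≤ δ₂)
    (hsmall : δ₁ / r + δ₂ / s < 1 / (r * s)) :
    ‖z‖ ≤ δ₁ / r := by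
  obtain ⟨a, ha⟩ := approx r hr.pos z δ₁ h1
  obtain ⟨b, hb⟩ := approx s hs.pos z δ₂ h2
  have hr' : (0:ℝ) < r := by exact_mod_cast hr.pos
  have hs' : (0:ℝ) < s := by exact_mod_cast hs.pos
  have hfrac : ‖((((a:ℝ)/r - (b:ℝ)/s) : ℝ) : UnitAddCircle)‖ < 1 / (r*s) := by
    have e : ((((a:ℝ)/r - (b:ℝ)/s) : ℝ) : UnitAddCircle)
        = (z - (((b:ℝ)/s : ℝ) : UnitAddCircle)) - (z - (((a:ℝ)/r : ℝ) : UnitAddCircle)) := by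
      rw [AddCircle.coe_sub]; abel
    rw [e]
    calc ‖_ - _‖ ≤ ‖z - (((b:ℝ)/s : ℝ) : UnitAddCircle)‖ + ‖z - (((a:ℝ)/r : ℝ) : UnitAddCircle)‖ :=
          norm_sub_le _ _
      _ ≤ δ₂ / s + δ₁ / r := add_le_add hb ha
      _ < 1 / (r*s) := by linarith
  have e2 : (a:ℝ)/r - (b:ℝ)/s = ((a * s - b * r : ℤ) : ℝ) / ((r*s : ℕ) : ℝ) := by
    push_cast; field_simp
  rw [e2] at hfrac
  have hdvd : ((r*s : ℕ) : ℤ) ∣ (a * s - b * r) := by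
    refine rigid _ _ (Nat.mul_pos hr.pos hs.pos) ?_
    convert hfrac using 2
    push_cast; ring
  have hra : (r:ℤ) ∣ a := by
    have h5 : (r:ℤ) ∣ a * s - b * r := dvd_trans ⟨s, by push_cast; ring⟩ hdvd
    have h6 : (r:ℤ) ∣ a * s := by
      have := dvd_add h5 (dvd_mul_left (r:ℤ) b)
      simpa using this
    have hcop : IsCoprime (r:ℤ) (s:ℤ) := by
      rw [Int.isCoprime_iff_gcd_eq_one]
      exact_mod_cast (Nat.coprime_primes hr hs).mpr hrs
    exact hcop.dvd_of_dvd_mul_right h6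
  obtain ⟨a', rfl⟩ := hra
  have e3 : (((r:ℤ) * a' : ℤ):ℝ) / (r:ℝ) = ((a' : ℤ) : ℝ) := by
    push_cast; field_simp
  rw [e3, coe_int, sub_zero] at ha
  exact ha

lemma comb (S : Finset ℕ) (cond : ℕ → ℕ → Prop) [∀ p q, Decidable (cond p q)]
    (C : ℝ) (hC : 1 ≤ C)
    (hbig : 4 * C^2 ≤ (S.card : ℝ))
    (hcount : (S.card : ℝ)^2 / C ≤ ((S ×ˢ S).filter (fun q => cond q.1 q.2)).card) :
    ∃ p₁ ∈ S, ∃ p₂ ∈ S, p₁ ≠ p₂ ∧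
      (S.card : ℝ) / (2 * C^2) ≤ (S.filter (fun q => cond p₁ q ∧ cond p₂ q)).card := by
  classical
  set N := S.card with hN
  have hC0 : (0:ℝ) < C := lt_of_lt_of_le one_pos hC
  have hN4 : (4:ℝ) ≤ N := by nlinarith
  have hN0 : (0:ℝ) < N := by linarith
  set d : ℕ → ℕ := fun q => (S.filter (fun p => cond p q)).card with hd
  set w : ℕ → ℕ → ℕ := fun p₁ p₂ => (S.filter (fun q => cond p₁ q ∧ cond p₂ q)).card with hw
  have hG : ((S ×ˢ S).filter (fun q => cond q.1 q.2)).card = ∑ q ∈ S, d q := by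
    rw [Finset.card_filter, Finset.sum_product, Finset.sum_comm]
    exact Finset.sum_congr rfl fun q _ => (Finset.card_filter _ _).symm
  have hT : ∑ x ∈ S ×ˢ S, w x.1 x.2 = ∑ q ∈ S, (d q)^2 := by
    rw [Finset.sum_product]
    have h1 : ∀ p₁ p₂ : ℕ, w p₁ p₂
        = ∑ q ∈ S, (if cond p₁ q then 1 else 0) * (if cond p₂ q then 1 else 0) := by
      intro p₁ p₂
      simp only [hw, Finset.card_filter]
      exact Finset.sum_congr rfl fun q _ => by split_ifs <;> simp_all
    simp_rw [h1]
    rw [show (∑ p₁ ∈ S, ∑ p₂ ∈ S, ∑ q ∈ S,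
        (if cond p₁ q then 1 else 0) * (if cond p₂ q then 1 else 0))
      = ∑ p₁ ∈ S, ∑ q ∈ S, ∑ p₂ ∈ S,
        (if cond p₁ q then 1 else 0) * (if cond p₂ q then 1 else 0) from
      Finset.sum_congr rfl fun p₁ _ => Finset.sum_comm, Finset.sum_comm]
    refine Finset.sum_congr rfl fun q _ => ?_
    rw [← Finset.sum_mul_sum, sq]
    congr 1 <;> exact (Finset.card_filter _ _).symm
  have hCS : (∑ q ∈ S, d q)^2 ≤ N * ∑ q ∈ S, (d q)^2 := sq_sum_le_card_mul_sum_sq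
  have hsq : (N:ℝ)^3 / C^2 ≤ ∑ q ∈ S, ((d q : ℝ))^2 := by
    have h2 : ((∑ q ∈ S, d q : ℕ) : ℝ) ≥ (N:ℝ)^2 / C := by rw [← hG]; exact_mod_cast hcount
    have h3 : ((∑ q ∈ S, d q : ℕ) : ℝ)^2 ≤ (N:ℝ) * ∑ q ∈ S, ((d q : ℝ))^2 := by
      push_cast
      exact_mod_cast hCS
    have h4 : ((N:ℝ)^2 / C)^2 ≤ ((∑ q ∈ S, d q : ℕ) : ℝ)^2 := by
      have : (0:ℝ) ≤ (N:ℝ)^2 / C := by positivity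
      nlinarith
    rw [div_pow] at h4
    rw [ge_iff_le, div_le_iff₀ hC0] at h2
    have h5 : ((N:ℝ)^2)^2 / C^2 ≤ (N:ℝ) * ∑ q ∈ S, ((d q : ℝ))^2 := le_trans h4 h3
    rw [div_le_iff₀ (by positivity)] at h5 ⊢
    nlinarith [h5]
  by_contra hcon
  push_neg at hcon
  have hdiag : ∀ p ∈ S, (w p p : ℝ) ≤ N := by
    intro p _
    exact_mod_cast Nat.cast_le.mpr (Finset.card_filter_le _ _)
  have hoff : ∀ p₁ ∈ S, ∀ p₂ ∈ S, p₁ ≠ p₂ → (w p₁ p₂ : ℝ) < (N:ℝ) / (2*C^2) := by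
    intro p₁ h₁ p₂ h₂ hne
    exact hcon p₁ h₁ p₂ h₂ hne
  have hTbound : ((∑ x ∈ S ×ˢ S, w x.1 x.2 : ℕ) : ℝ) ≤ (N:ℝ)^2 + (N:ℝ)^2 * ((N:ℝ)/(2*C^2)) := by
    push_cast
    rw [Finset.sum_product]
    have hrow : ∀ p₁ ∈ S, ∑ p₂ ∈ S, (w p₁ p₂ : ℝ) ≤ (N:ℝ) + (N:ℝ) * ((N:ℝ)/(2*C^2)) := by
      intro p₁ h₁
      rw [← Finset.sum_erase_add _ _ h₁]
      have e1 : ∑ p₂ ∈ S.erase p₁, (w p₁ p₂ : ℝ) ≤ (N:ℝ) * ((N:ℝ)/(2*C^2)) := by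
        calc ∑ p₂ ∈ S.erase p₁, (w p₁ p₂ : ℝ)
            ≤ ∑ _p₂ ∈ S.erase p₁, ((N:ℝ)/(2*C^2)) := by
              refine Finset.sum_le_sum fun p₂ h₂ => ?_
              exact (hoff p₁ h₁ p₂ (Finset.mem_of_mem_erase h₂)
                (fun h => (Finset.ne_of_mem_erase h₂) h.symm)).le
          _ = (S.erase p₁).card * ((N:ℝ)/(2*C^2)) := by rw [Finset.sum_const, nsmul_eq_mul]
          _ ≤ (N:ℝ) * ((N:ℝ)/(2*C^2)) := by
              have : ((S.erase p₁).card : ℝ) ≤ N := by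
                exact_mod_cast Nat.cast_le.mpr (Finset.card_erase_le)
              have hpos : (0:ℝ) ≤ (N:ℝ)/(2*C^2) := by positivity
              nlinarith
      linarith [hdiag p₁ h₁, e1]
    calc ∑ p₁ ∈ S, ∑ p₂ ∈ S, (w p₁ p₂ : ℝ)
        ≤ ∑ _p₁ ∈ S, ((N:ℝ) + (N:ℝ) * ((N:ℝ)/(2*C^2))) := Finset.sum_le_sum hrow
      _ = (N:ℝ) * ((N:ℝ) + (N:ℝ) * ((N:ℝ)/(2*C^2))) := by rw [Finset.sum_const, nsmul_eq_mul]
      _ = (N:ℝ)^2 + (N:ℝ)^2 * ((N:ℝ)/(2*C^2)) := by ring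
  have hTlow : (N:ℝ)^3 / C^2 ≤ ((∑ x ∈ S ×ˢ S, w x.1 x.2 : ℕ) : ℝ) := by
    rw [hT]; push_cast; exact hsq
  have hfin : (N:ℝ)^3 / C^2 ≤ (N:ℝ)^2 + (N:ℝ)^3/(2*C^2) := by
    refine le_trans hTlow (le_trans hTbound ?_)
    have e : (N:ℝ)^2 * ((N:ℝ)/(2*C^2)) = (N:ℝ)^3/(2*C^2) := by ring
    linarith [e.le]
  have hC2 : (0:ℝ) < C^2 := by positivity
  rw [div_le_iff₀ hC2] at hfin
  have expand : ((N:ℝ)^2 + (N:ℝ)^3/(2*C^2)) * C^2 = (N:ℝ)^2*C^2 + (N:ℝ)^3/2 := by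
    field_simp
  rw [expand] at hfin
  nlinarith [hfin, hN0, hC2, hN4, hbig]

/-- smallness helper for the `twoPrime` side condition -/
lemma hsmall_gen (P ε A B δ₁ δ₂ : ℝ) (hP : 1 < P) (hε0 : 0 ≤ ε) (hε : ε < 1/(100*P^2))
    (hA : P ≤ A) (hA2 : A ≤ 2*P) (hB : P ≤ B) (hB2 : B ≤ 2*P)
    (h₁0 : 0 ≤ δ₁) (h₁ : δ₁ ≤ 8*P*ε) (h₂0 : 0 ≤ δ₂) (h₂ : δ₂ ≤ 8*P*ε) :
    δ₁ / A + δ₂ / B < 1 / (A * B) := by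
  have hP0 : (0:ℝ) < P := by linarith
  have hA0 : (0:ℝ) < A := by linarith
  have hB0 : (0:ℝ) < B := by linarith
  have e8 : (8*P*ε)/P = 8*ε := by field_simp
  have k1 : δ₁ / A ≤ 8 * ε := by
    have t1 : δ₁ / A ≤ (8*P*ε) / P := div_le_div₀ (by positivity) h₁ hP0 hA
    linarith [e8 ▸ t1]
  have k2 : δ₂ / B ≤ 8 * ε := by
    have t1 : δ₂ / B ≤ (8*P*ε) / P := div_le_div₀ (by positivity) h₂ hP0 hB
    linarith [e8 ▸ t1]
  have k3 : 16*ε < 1/(4*P^2) := by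
    rw [lt_div_iff₀ (by positivity)]
    rw [lt_div_iff₀ (by positivity)] at hε
    nlinarith [hε, hε0, sq_nonneg P]
  have k4 : 1/(4*P^2) ≤ 1/(A*B) := by
    apply one_div_le_one_div_of_le (by positivity)
    nlinarith
  linarith


set_option maxHeartbeats 2000000 in
/-- Core construction: given two distinct anchor primes and the compatibility
relations, build `β` approximating all doubly-related frequencies. -/
lemma core (P ε : ℝ) (α : ℕ → UnitAddCircle)
    (hP : 1 < P) (hε0 : 0 ≤ ε) (hεlt : ε < 1/(100*P^2))
    (p₁ p₂ q₁ : ℕ) (hp₁ : p₁.Prime) (hp₂ : p₂.Prime) (hq₁ : q₁.Prime)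
    (hp₁l : P ≤ p₁) (hp₁u : (p₁:ℝ) ≤ 2*P)
    (hp₂l : P ≤ p₂) (hp₂u : (p₂:ℝ) ≤ 2*P)
    (hq₁l : P ≤ q₁) (hq₁u : (q₁:ℝ) ≤ 2*P)
    (hne : p₁ ≠ p₂) (hne2 : q₁ ≠ p₁)
    (hc1 : ‖p₁ • α q₁ - q₁ • α p₁‖ < ε) (hc2 : ‖p₂ • α q₁ - q₁ • α p₂‖ < ε) :
    ∃ β : UnitAddCircle, ∀ q : ℕ, P ≤ q → (q:ℝ) ≤ 2*P →
      ‖p₁ • α q - q • α p₁‖ < ε → ‖p₂ • α q - q • α p₂‖ < ε →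
      ‖q • β - α q‖ ≤ 100 * ε / P := by
  have hP0 : (0:ℝ) < P := by linarith
  have hrp₁ : (0:ℝ) < p₁ := by linarith
  have hrq₁ : (0:ℝ) < q₁ := by linarith
  -- Step R2: mutual relation between q and q₁ for any doubly-related q
  have hz : ∀ q : ℕ, P ≤ q → (q:ℝ) ≤ 2*P →
      ‖p₁ • α q - q • α p₁‖ < ε → ‖p₂ • α q - q • α p₂‖ < ε →
      ‖q₁ • α q - q • α q₁‖ ≤ 4 * ε := by
    intro q hql hqu hq1 hq2
    set z : UnitAddCircle := q₁ • α q - q • α q₁ with hzdef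
    have key : ∀ r : ℕ, ‖r • α q - q • α r‖ < ε → ‖r • α q₁ - q₁ • α r‖ < ε →
        ‖r • z‖ ≤ 4*P*ε := by
      intro r h1 h2
      have id1 : r • z = q₁ • (r • α q - q • α r) - q • (r • α q₁ - q₁ • α r) := by
        rw [hzdef]; simp only [← natCast_zsmul]; module
      rw [id1]
      calc ‖q₁ • (r • α q - q • α r) - q • (r • α q₁ - q₁ • α r)‖
          ≤ ‖q₁ • (r • α q - q • α r)‖ + ‖q • (r • α q₁ - q₁ • α r)‖ := norm_sub_le _ _
        _ ≤ (q₁:ℝ) * ‖r • α q - q • α r‖ + (q:ℝ) * ‖r • α q₁ - q₁ • α r‖ :=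
            add_le_add norm_nsmul_le norm_nsmul_le
        _ ≤ (2*P) * ε + (2*P) * ε := by
            have n1 : (0:ℝ) ≤ ‖r • α q - q • α r‖ := norm_nonneg _
            have n2 : (0:ℝ) ≤ ‖r • α q₁ - q₁ • α r‖ := norm_nonneg _
            have b1 : (q₁:ℝ) * ‖r • α q - q • α r‖ ≤ (2*P) * ε := by
              apply mul_le_mul hq₁u h1.le n1 (by linarith)
            have b2 : (q:ℝ) * ‖r • α q₁ - q₁ • α r‖ ≤ (2*P) * ε := by
              apply mul_le_mul hqu h2.le n2 (by linarith)
            linarith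
        _ = 4*P*ε := by ring
    have hb1 : ‖p₁ • z‖ ≤ 4*P*ε := key p₁ hq1 hc1
    have hb2 : ‖p₂ • z‖ ≤ 4*P*ε := key p₂ hq2 hc2
    have hsm : (4*P*ε) / p₁ + (4*P*ε) / p₂ < 1 / ((p₁:ℝ) * p₂) :=
      hsmall_gen P ε p₁ p₂ _ _ hP hε0 hεlt hp₁l hp₁u hp₂l hp₂u
        (by positivity) (by nlinarith) (by positivity) (by nlinarith)
    have := twoPrime p₁ p₂ hp₁ hp₂ hne z (4*P*ε) (4*P*ε) hb1 hb2 hsm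
    refine this.trans ?_
    rw [div_le_iff₀ hrp₁]
    nlinarith
  -- construct β
  obtain ⟨β₀, hβ₀⟩ := divisible p₁ hp₁.pos (α p₁)
  set x : UnitAddCircle := q₁ • β₀ - α q₁ with hxdef
  have hx : ‖p₁ • x‖ ≤ ε := by
    have id2 : p₁ • x = q₁ • (p₁ • β₀) - p₁ • α q₁ := by
      rw [hxdef]; simp only [← natCast_zsmul]; module
    rw [id2, hβ₀, ← norm_neg]
    have : -(q₁ • α p₁ - p₁ • α q₁) = p₁ • α q₁ - q₁ • α p₁ := by abel
    rw [this]
    exact hc1.le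
  obtain ⟨k, hk⟩ := approx p₁ hp₁.pos x ε hx
  -- Bezout coefficients
  have hcop : IsCoprime (q₁:ℤ) (p₁:ℤ) := by
    rw [Int.isCoprime_iff_gcd_eq_one]
    exact_mod_cast (Nat.coprime_primes hq₁ hp₁).mpr hne2
  obtain ⟨u, v, huv⟩ := hcop
  set j : ℤ := -k * u with hjdef
  have hj : (q₁:ℤ) * j + k = k * v * p₁ := by
    have : u * q₁ + v * p₁ = 1 := huv
    calc (q₁:ℤ) * j + k = k * (1 - u * q₁) := by rw [hjdef]; ring
      _ = k * (v * p₁) := by rw [← this]; ring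
      _ = k * v * p₁ := by ring
  set β : UnitAddCircle := β₀ + (((j:ℝ)/(p₁:ℝ) : ℝ) : UnitAddCircle) with hβdef
  have claim1 : (p₁:ℕ) • β = α p₁ := by
    rw [hβdef, smul_add, hβ₀, nsmul_coe]
    have e : (p₁:ℝ) * ((j:ℝ)/(p₁:ℝ)) = (j:ℝ) := by field_simp
    rw [e, coe_int, add_zero]
  have claim2 : ‖(q₁:ℕ) • β - α q₁‖ ≤ ε / p₁ := by
    have e1 : (q₁:ℕ) • β - α q₁ = x + (((q₁:ℝ) * ((j:ℝ)/(p₁:ℝ)) : ℝ) : UnitAddCircle) := by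
      rw [hβdef, smul_add, nsmul_coe, hxdef]; abel
    have e2 : (((q₁:ℝ) * ((j:ℝ)/(p₁:ℝ)) : ℝ) : UnitAddCircle)
        = - (((k:ℝ)/(p₁:ℝ) : ℝ) : UnitAddCircle) := by
      rw [eq_neg_iff_add_eq_zero, ← AddCircle.coe_add, AddCircle.coe_eq_zero_iff]
      refine ⟨k * v, ?_⟩
      have hcast : ((q₁:ℝ) * (j:ℝ) + (k:ℝ)) = ((k*v : ℤ):ℝ) * (p₁:ℝ) := by
        exact_mod_cast congrArg (fun m : ℤ => (m:ℝ)) hj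
      have : (q₁:ℝ) * ((j:ℝ)/(p₁:ℝ)) + (k:ℝ)/(p₁:ℝ) = ((q₁:ℝ) * (j:ℝ) + (k:ℝ))/(p₁:ℝ) := by
        field_simp
      rw [this, hcast]
      field_simp
      simp
    rw [e1, e2]
    have : x + -(((k:ℝ)/(p₁:ℝ) : ℝ) : UnitAddCircle) = x - (((k:ℝ)/(p₁:ℝ) : ℝ) : UnitAddCircle) := by
      abel
    rw [this]
    exact hk
  refine ⟨β, fun q hql hqu hq1 hq2 => ?_⟩
  set y : UnitAddCircle := q • β - α q with hydef
  have hy1 : ‖(p₁:ℕ) • y‖ ≤ ε := by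
    have id3 : (p₁:ℕ) • y = q • ((p₁:ℕ) • β) - p₁ • α q := by
      rw [hydef]; simp only [← natCast_zsmul]; module
    rw [id3, claim1, ← norm_neg]
    have : -(q • α p₁ - p₁ • α q) = p₁ • α q - q • α p₁ := by abel
    rw [this]
    exact hq1.le
  have hy2 : ‖(q₁:ℕ) • y‖ ≤ 6 * ε := by
    have id4 : (q₁:ℕ) • y = q • ((q₁:ℕ) • β - α q₁) - (q₁ • α q - q • α q₁) := by
      rw [hydef]; simp only [← natCast_zsmul]; module
    rw [id4]
    calc ‖q • ((q₁:ℕ) • β - α q₁) - (q₁ • α q - q • α q₁)‖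
        ≤ ‖q • ((q₁:ℕ) • β - α q₁)‖ + ‖q₁ • α q - q • α q₁‖ := norm_sub_le _ _
      _ ≤ (q:ℝ) * ‖(q₁:ℕ) • β - α q₁‖ + 4*ε :=
          add_le_add norm_nsmul_le (hz q hql hqu hq1 hq2)
      _ ≤ (2*P) * (ε/p₁) + 4*ε := by
          have := claim2
          have n1 : (0:ℝ) ≤ ‖(q₁:ℕ) • β - α q₁‖ := norm_nonneg _
          have b1 : (q:ℝ) * ‖(q₁:ℕ) • β - α q₁‖ ≤ (2*P) * (ε/p₁) :=
            mul_le_mul hqu claim2 n1 (by linarith)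
          linarith
      _ ≤ 6 * ε := by
          have : (2*P) * (ε/p₁) ≤ 2*ε := by
            rw [mul_div_assoc']
            rw [div_le_iff₀ hrp₁]
            nlinarith
          linarith
  have hsm2 : ε / p₁ + (6*ε) / q₁ < 1 / ((p₁:ℝ) * q₁) :=
    hsmall_gen P ε p₁ q₁ ε (6*ε) hP hε0 hεlt hp₁l hp₁u hq₁l hq₁u
      hε0 (by nlinarith) (by positivity) (by nlinarith)
  have hfin := twoPrime p₁ q₁ hp₁ hq₁ (fun h => hne2 h.symm) y ε (6*ε) hy1 hy2 hsm2
  refine hfin.trans ?_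
  rw [div_le_div_iff₀ hrp₁ hP0]
  nlinarith

end Stmt8Aux

open Stmt8Aux in
/-- Lemma 2.4 ("conc"): if a positive proportion of pairs of frequencies satisfy the
compatibility relation, a positive proportion are simultaneously approximated by
multiples of a single frequency. -/
theorem stmt_8 :
    ∃ C c : ℝ, 1 ≤ C ∧ 0 < c ∧
      ∀ (P ε : ℝ) (S : Finset ℕ) (α : ℕ → UnitAddCircle),
        1 < P → 0 ≤ ε → ε < 1 / (C * P ^ 2) →
        (∀ p ∈ S, p.Prime ∧ P ≤ p ∧ (p : ℝ) ≤ 2 * P) →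
        ((S.card : ℝ) ^ 2 / C ≤
          ((S ×ˢ S).filter
            (fun q => ‖q.1 • α q.2 - q.2 • α q.1‖ < ε)).card) →
        ∃ β : UnitAddCircle,
          c * S.card ≤
            (S.filter (fun p => ‖p • β - α p‖ ≤ C * ε / P)).card := by
  refine ⟨100, 1/40000, by norm_num, by norm_num, ?_⟩
  intro P ε S α hP hε0 hεlt hprimes hcount
  have hP0 : (0:ℝ) < P := by linarith
  have hεlt' : ε < 1/(100*P^2) := by
    convert hεlt using 2
  by_cases hbig : 4 * (100:ℝ)^2 ≤ (S.card : ℝ)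
  · -- big case
    obtain ⟨p₁, hp₁S, p₂, hp₂S, hne, hW⟩ :=
      comb S (fun p q => ‖p • α q - q • α p‖ < ε) 100 (by norm_num) hbig hcount
    set W := S.filter (fun q => ‖p₁ • α q - q • α p₁‖ < ε ∧ ‖p₂ • α q - q • α p₂‖ < ε) with hWdef
    have hW2 : 2 ≤ W.card := by
      have h2 : (2:ℝ) ≤ (W.card:ℝ) := by
        refine le_trans ?_ hW
        rw [le_div_iff₀ (by norm_num)]
        linarith
      exact_mod_cast h2
    have hne' : (W.erase p₁).Nonempty := by
      rw [← Finset.card_pos]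
      have := Finset.pred_card_le_card_erase (s := W) (a := p₁)
      omega
    obtain ⟨q₁, hq₁e⟩ := hne'
    have hq₁W : q₁ ∈ W := Finset.mem_of_mem_erase hq₁e
    have hq₁ne : q₁ ≠ p₁ := Finset.ne_of_mem_erase hq₁e
    rw [hWdef, Finset.mem_filter] at hq₁W
    obtain ⟨hq₁S, hc1, hc2⟩ := hq₁W
    obtain ⟨hp₁p, hp₁l, hp₁u⟩ := hprimes p₁ hp₁S
    obtain ⟨hp₂p, hp₂l, hp₂u⟩ := hprimes p₂ hp₂S
    obtain ⟨hq₁p, hq₁l, hq₁u⟩ := hprimes q₁ hq₁S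
    obtain ⟨β, hβ⟩ := core P ε α hP hε0 hεlt' p₁ p₂ q₁ hp₁p hp₂p hq₁p
      hp₁l hp₁u hp₂l hp₂u hq₁l hq₁u hne hq₁ne hc1 hc2
    refine ⟨β, ?_⟩
    have hsub : W ⊆ S.filter (fun p => ‖p • β - α p‖ ≤ 100*ε/P) := by
      intro q hq
      rw [hWdef, Finset.mem_filter] at hq
      obtain ⟨hqS, hqc1, hqc2⟩ := hq
      obtain ⟨hqp, hql, hqu⟩ := hprimes q hqS
      rw [Finset.mem_filter]
      exact ⟨hqS, hβ q hql hqu hqc1 hqc2⟩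
    have hle : (W.card : ℝ) ≤ ((S.filter (fun p => ‖p • β - α p‖ ≤ 100*ε/P)).card : ℝ) := by
      exact_mod_cast Finset.card_le_card hsub
    have e1 : (1:ℝ)/40000 * S.card ≤ (S.card:ℝ)/(2*100^2) := by
      have h : (0:ℝ) ≤ (S.card:ℝ) := Nat.cast_nonneg _
      norm_num
      linarith
    linarith [hW, hle, e1]
  · -- small case
    push_neg at hbig
    rcases S.eq_empty_or_nonempty with rfl | ⟨p₀, hp₀⟩
    · exact ⟨0, by simp⟩
    · obtain ⟨hp₀p, hp₀l, hp₀u⟩ := hprimes p₀ hp₀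
      obtain ⟨β, hβ⟩ := divisible p₀ hp₀p.pos (α p₀)
      refine ⟨β, ?_⟩
      have h1 : p₀ ∈ S.filter (fun p => ‖p • β - α p‖ ≤ 100 * ε / P) := by
        rw [Finset.mem_filter]
        refine ⟨hp₀, ?_⟩
        rw [hβ, sub_self, norm_zero]
        positivity
      have hcard : 1 ≤ (S.filter (fun p => ‖p • β - α p‖ ≤ 100 * ε / P)).card :=
        Finset.card_pos.mpr ⟨p₀, h1⟩
      have hc : ((S.filter (fun p => ‖p • β - α p‖ ≤ 100 * ε / P)).card : ℝ) ≥ 1 := by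
        exact_mod_cast hcard
      have : (1:ℝ)/40000 * S.card < 1 := by nlinarith
      linarith
end

section
/- (Vinogradov's lemma) Let α ∈ ℝ/ℤ, let 0 < ε < 1/100, 100·ε < δ < 1, and let N be a positive real with δ·N > 100. Suppose ‖n·α‖ < ε for at least δ·N integers n ∈ [−N, N]. Then there exist integers a and q with 1 ≤ q ≤ C/δ and |a| ≤ C/δ for an absolute constant C, such that ‖α − a/q‖ ≤ C·ε/(δ·N), where a/q is viewed in ℝ/ℤ. -/
private lemma unorm_eq (y : ℝ) : ‖(y : UnitAddCircle)‖ = |y - round y| := by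
  have := AddCircle.norm_eq (p := (1:ℝ)) (x := y); simpa using this

private lemma unorm_le (y : ℝ) : ‖(y : UnitAddCircle)‖ ≤ |y| := by
  rw [unorm_eq]; simpa using round_le y 0

private lemma floor_int_div_real (m : ℤ) (d : ℕ) : (⌊(m:ℝ)/(d:ℝ)⌋ : ℤ) = m / (d:ℤ) := by
  rw [show ((m:ℝ)/(d:ℝ)) = ((((m:ℚ)/(d:ℚ)) : ℚ) : ℝ) by push_cast; ring, Rat.floor_cast,
    Rat.floor_intCast_div_natCast]

private lemma exists_lift (α : UnitAddCircle) :
    ∃ x : ℝ, 0 ≤ x ∧ x < 1 ∧ (x : UnitAddCircle) = α := by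
  induction α using QuotientAddGroup.induction_on with
  | H y =>
    refine ⟨Int.fract y, Int.fract_nonneg y, Int.fract_lt_one y, ?_⟩
    have h0 : (((⌊y⌋ : ℤ) : ℝ) : UnitAddCircle) = 0 := by
      rw [AddCircle.coe_eq_zero_iff]; exact ⟨⌊y⌋, by simp⟩
    show ((y - (⌊y⌋:ℤ) : ℝ) : UnitAddCircle) = (y : UnitAddCircle)
    rw [AddCircle.coe_sub, h0, sub_zero]

private lemma unorm_int_div {m q : ℤ} (hq : 0 < q) (h : ¬ q ∣ m) :
    1/(q:ℝ) ≤ ‖(((m:ℝ)/(q:ℝ)) : UnitAddCircle)‖ := by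
  have hq' : (0:ℝ) < (q:ℝ) := by exact_mod_cast hq
  rw [unorm_eq]
  set k := round ((m:ℝ)/(q:ℝ)) with hk
  have hne : m - q*k ≠ 0 := by
    intro hc
    exact h ⟨k, by omega⟩
  have h1 : (1:ℝ) ≤ |((m - q*k : ℤ) : ℝ)| := by
    rw [← Int.cast_abs]
    exact_mod_cast Int.one_le_abs hne
  have h2 : (m:ℝ)/(q:ℝ) - (k:ℝ) = ((m - q*k : ℤ) : ℝ)/(q:ℝ) := by
    push_cast; field_simp
  rw [h2, abs_div, abs_of_pos hq']
  gcongr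

set_option maxHeartbeats 2000000 in
/-- Vinogradov's lemma. -/
theorem stmt_13 :
    ∃ C : ℝ, 1 ≤ C ∧
      ∀ (α : UnitAddCircle) (ε δ N : ℝ),
        0 < ε → ε < 1 / 100 → 100 * ε < δ → δ < 1 → 0 < N → 100 < δ * N →
        δ * N ≤
          (((Finset.Icc (-⌊N⌋) ⌊N⌋).filter (fun n : ℤ => ‖n • α‖ < ε)).card : ℝ) →
        ∃ a q : ℤ, 1 ≤ q ∧ (q : ℝ) ≤ C / δ ∧ |(a : ℝ)| ≤ C / δ ∧
          ‖α - (((a : ℝ) / (q : ℝ) : ℝ) : UnitAddCircle)‖ ≤ C * ε / (δ * N) := by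
  refine ⟨100, by norm_num, ?_⟩
  intro α ε δ N hε hε1 hεδ hδ1 hN hδN hcard
  obtain ⟨x, hx0, hx1, rfl⟩ := exists_lift α
  set S : Finset ℤ :=
    (Finset.Icc (-⌊N⌋) ⌊N⌋).filter (fun n : ℤ => ‖n • ((x : UnitAddCircle))‖ < ε) with hSdef
  have hδ0 : (0:ℝ) < δ := lt_trans (by positivity) hεδ
  have hN100 : (100:ℝ) < N := by nlinarith
  have hMN : (⌊N⌋ : ℝ) ≤ N := Int.floor_le N
  have hM0 : (0:ℤ) ≤ ⌊N⌋ := by positivity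
  -- Dirichlet approximation with parameter Q
  set Q : ℕ := ⌈δ * N / (50 * ε)⌉₊ with hQdef
  have hQv : 0 < δ * N / (50 * ε) := by positivity
  have hQ0 : 0 < Q := Nat.ceil_pos.mpr hQv
  have hQge : δ * N / (50 * ε) ≤ (Q:ℝ) := Nat.le_ceil _
  have h200 : (200:ℝ) ≤ δ * N / (50 * ε) := by
    rw [le_div_iff₀ (by positivity)]; nlinarith
  have hQle : (Q:ℝ) ≤ δ * N / (49 * ε) := by
    have h1 : (Q:ℝ) < δ * N / (50 * ε) + 1 := Nat.ceil_lt_add_one hQv.le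
    have h2 : δ * N / (50 * ε) + δ * N / (50 * ε) / 49 = δ * N / (49 * ε) := by
      field_simp; ring
    nlinarith
  obtain ⟨r, hr1, hr2⟩ := Real.exists_rat_abs_sub_le_and_den_le x hQ0
  set a : ℤ := r.num with hadef
  set q : ℤ := (r.den : ℤ) with hqdef
  have hq0 : 0 < q := by rw [hqdef]; exact_mod_cast r.pos
  have hq0' : (0:ℝ) < (q:ℝ) := by exact_mod_cast hq0
  have hq1' : (1:ℝ) ≤ (q:ℝ) := by exact_mod_cast hq0
  have hrc : (r : ℝ) = (a:ℝ)/(q:ℝ) := by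
    rw [Rat.cast_def]; push_cast [hadef, hqdef]; ring
  set β : ℝ := x - (a:ℝ)/(q:ℝ) with hβdef
  have hqQ : (q:ℝ) ≤ (Q:ℝ) := by simp only [hqdef]; exact_mod_cast hr2
  have hβ : |β| ≤ 1/(((Q:ℝ)+1) * (q:ℝ)) := by
    rw [hβdef, ← hrc, hqdef]
    push_cast
    exact hr1
  have hβ2 : |β| ≤ 50 * ε / (δ * N) * (1/(q:ℝ)) := by
    have h1 : δ * N / (50 * ε) * (q:ℝ) ≤ ((Q:ℝ)+1) * (q:ℝ) := by nlinarith
    have h2 : (0:ℝ) < δ * N / (50 * ε) * (q:ℝ) := by positivity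
    calc |β| ≤ 1/(((Q:ℝ)+1) * (q:ℝ)) := hβ
      _ ≤ 1/(δ * N / (50 * ε) * (q:ℝ)) := by
          apply one_div_le_one_div_of_le h2 h1
      _ = 50 * ε / (δ * N) * (1/(q:ℝ)) := by field_simp
  have hNβ : N * |β| ≤ 50 * ε / (δ * (q:ℝ)) := by
    calc N * |β| ≤ N * (50 * ε / (δ * N) * (1/(q:ℝ))) := by
          exact mul_le_mul_of_nonneg_left hβ2 hN.le
      _ = 50 * ε / (δ * (q:ℝ)) := by field_simp
  -- per-element estimate
  have key : ∀ n ∈ S, ‖(((n*a : ℤ):ℝ)/(q:ℝ) : UnitAddCircle)‖ ≤ ε + N * |β| := by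
    intro n hn
    obtain ⟨hnI, hnε⟩ := Finset.mem_filter.mp hn
    rw [Finset.mem_Icc] at hnI
    have hnN : |(n:ℝ)| ≤ N := by
      rw [abs_le]; constructor
      · have : (-⌊N⌋ : ℝ) ≤ (n:ℝ) := by exact_mod_cast hnI.1
        push_cast at this ⊢; linarith
      · have : (n:ℝ) ≤ (⌊N⌋ : ℝ) := by exact_mod_cast hnI.2
        linarith
    have hsm : (n : ℤ) • ((x : UnitAddCircle)) = ((n * x : ℝ) : UnitAddCircle) := by
      rw [← AddCircle.coe_zsmul]; norm_num [zsmul_eq_mul]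
    rw [hsm] at hnε
    have hsplit : (((n*a : ℤ):ℝ)/(q:ℝ)) = (n * x) - (n : ℝ) * β := by
      push_cast; rw [hβdef]; field_simp; ring
    rw [hsplit, AddCircle.coe_sub]
    calc ‖((n * x : ℝ) : UnitAddCircle) - (((n:ℝ) * β : ℝ) : UnitAddCircle)‖
        ≤ ‖((n * x : ℝ) : UnitAddCircle)‖ + ‖(((n:ℝ) * β : ℝ) : UnitAddCircle)‖ := norm_sub_le _ _
      _ ≤ ε + N * |β| := by
          have h1 : ‖(((n:ℝ) * β : ℝ) : UnitAddCircle)‖ ≤ |(n:ℝ) * β| := unorm_le _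
          have h2 : |(n:ℝ) * β| ≤ N * |β| := by
            rw [abs_mul]; exact mul_le_mul_of_nonneg_right hnN (abs_nonneg _)
          exact add_le_add hnε.le (h1.trans h2)
  have hgcd : Int.gcd q a = 1 := by
    rw [Int.gcd]
    simpa [hqdef, hadef, Nat.coprime_comm] using r.reduced
  -- every element of S is divisible by q
  have hdvd : ∀ n ∈ S, q ∣ n := by
    by_contra hcon
    push_neg at hcon
    obtain ⟨n0, hn0S, hn0⟩ := hcon
    -- q is large: 1 ≤ 2 ε q
    have hq2ε : (1:ℝ) ≤ 2 * ε * (q:ℝ) := by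
      have hd : ¬ q ∣ n0 * a := by
        intro hd
        exact hn0 (Int.dvd_of_dvd_mul_left_of_gcd_one hd hgcd)
      have h1 : 1/(q:ℝ) ≤ ‖(((n0*a : ℤ):ℝ)/(q:ℝ) : UnitAddCircle)‖ := by
        have := unorm_int_div hq0 hd
        push_cast at this ⊢
        exact this
      have h2 := (h1.trans (key n0 hn0S)).trans (add_le_add_right hNβ ε)
      -- 1/q ≤ ε + 50ε/(δ q)
      have heq : (ε + 50 * ε / (δ * (q:ℝ))) * (q:ℝ) = ε * (q:ℝ) + 50*ε/δ := by
        field_simp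
      have h3 : 1 ≤ ε * (q:ℝ) + 50 * ε / δ := by
        rw [← heq]
        calc (1:ℝ) = 1/(q:ℝ) * (q:ℝ) := by field_simp
          _ ≤ _ := mul_le_mul_of_nonneg_right h2 hq0'.le
      have h4 : 50 * ε / δ ≤ 1/2 := by
        rw [div_le_div_iff₀ hδ0 (by norm_num)]; nlinarith
      nlinarith
    -- counting: injection into a product of intervals
    set E : ℤ := ⌊(q:ℝ)*ε + 50*ε/δ⌋ with hEdef
    have hE0 : (0:ℤ) ≤ E := Int.floor_nonneg.mpr (by positivity)
    have hEle : (E:ℝ) ≤ (q:ℝ)*ε + 50*ε/δ := Int.floor_le _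
    set b : ℤ → ℤ := fun n => round (((n*a : ℤ):ℝ)/(q:ℝ)) with hbdef
    set t : ℤ → ℤ := fun n => n*a - q * b n with htdef
    have htabs : ∀ n ∈ S, |(t n : ℝ)| ≤ (q:ℝ)*ε + 50*ε/δ := by
      intro n hn
      have h1 := key n hn
      rw [unorm_eq] at h1
      have h2 : (t n : ℝ) = (q:ℝ) * (((n*a : ℤ):ℝ)/(q:ℝ) - (b n : ℝ)) := by
        simp only [htdef]; push_cast; field_simp
      rw [h2, abs_mul, abs_of_pos hq0']
      calc (q:ℝ) * |((n*a : ℤ):ℝ)/(q:ℝ) - (b n : ℝ)|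
          ≤ (q:ℝ) * (ε + N * |β|) := mul_le_mul_of_nonneg_left h1 hq0'.le
        _ ≤ (q:ℝ) * (ε + 50 * ε / (δ * (q:ℝ))) := by
            refine mul_le_mul_of_nonneg_left (add_le_add_right hNβ ε) hq0'.le
        _ = (q:ℝ)*ε + 50*ε/δ := by field_simp
    have hmem : ∀ n ∈ S, (t n, (n + ⌊N⌋)/q) ∈
        Finset.Icc (-E) E ×ˢ Finset.Icc (0:ℤ) ((2*⌊N⌋)/q) := by
      intro n hn
      have habs := htabs n hn
      rw [abs_le] at habs
      refine Finset.mem_product.mpr ⟨Finset.mem_Icc.mpr ⟨?_, ?_⟩, Finset.mem_Icc.mpr ⟨?_, ?_⟩⟩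
      · rw [neg_le, hEdef]
        exact Int.le_floor.mpr (by push_cast; linarith [habs.1])
      · rw [hEdef]
        exact Int.le_floor.mpr (by push_cast; linarith [habs.2])
      · have hnI := Finset.mem_Icc.mp (Finset.mem_filter.mp hn).1
        exact Int.ediv_nonneg (by omega) hq0.le
      · have hnI := Finset.mem_Icc.mp (Finset.mem_filter.mp hn).1
        rw [hqdef, ← floor_int_div_real (n+⌊N⌋) r.den, ← floor_int_div_real (2*⌊N⌋) r.den]
        apply Int.floor_le_floor
        have hnum : ((n+⌊N⌋ : ℤ):ℝ) ≤ ((2*⌊N⌋ : ℤ):ℝ) := by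
          exact_mod_cast (by omega : n+⌊N⌋ ≤ 2*⌊N⌋)
        have hden : (0:ℝ) < (r.den:ℝ) := by exact_mod_cast r.pos
        gcongr
    have hinj : Set.InjOn (fun n => (t n, (n + ⌊N⌋)/q)) S := by
      intro n hn n' hn' he
      simp only [Prod.mk.injEq] at he
      obtain ⟨he1, he2⟩ := he
      have hd : q ∣ (n - n') * a := ⟨b n - b n', by simp only [htdef] at he1; linear_combination he1⟩
      have hdn : q ∣ (n - n') := Int.dvd_of_dvd_mul_left_of_gcd_one hd hgcd
      obtain ⟨s, hs⟩ := hdn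
      have hns : n + ⌊N⌋ = (n' + ⌊N⌋) + s*q := by linear_combination hs
      rw [hns, Int.add_mul_ediv_right _ _ hq0.ne'] at he2
      have hs0 : s = 0 := by omega
      rw [hs0, mul_zero] at hs
      omega
    have hcount := Finset.card_le_card_of_injOn _ hmem hinj
    rw [Finset.card_product] at hcount
    -- real form of the counting bound
    have hc1 : (((Finset.Icc (-E) E).card : ℕ) : ℝ) ≤ 2*((q:ℝ)*ε + 50*ε/δ) + 1 := by
      have h1 : ((Finset.Icc (-E) E).card : ℤ) = E + 1 - (-E) := Int.card_Icc_of_le _ _ (by omega)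
      have h2 : (((Finset.Icc (-E) E).card : ℕ) : ℝ) = ((E:ℝ) + 1 + (E:ℝ)) := by
        have := congrArg (fun z : ℤ => (z : ℝ)) h1
        push_cast at this ⊢
        linarith
      rw [h2]; linarith
    have hc2 : (((Finset.Icc (0:ℤ) ((2*⌊N⌋)/q)).card : ℕ) : ℝ) ≤ 2*N/(q:ℝ) + 1 := by
      have hd0 : (0:ℤ) ≤ (2*⌊N⌋)/q := Int.ediv_nonneg (by omega) hq0.le
      have h1 : ((Finset.Icc (0:ℤ) ((2*⌊N⌋)/q)).card : ℤ) = (2*⌊N⌋)/q + 1 - 0 :=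
        Int.card_Icc_of_le _ _ (by omega)
      have h3 : (((2*⌊N⌋)/q : ℤ) : ℝ) ≤ 2*N/(q:ℝ) := by
        rw [hqdef, ← floor_int_div_real (2*⌊N⌋) r.den]
        calc ((⌊((2*⌊N⌋ : ℤ):ℝ)/(r.den:ℝ)⌋ : ℤ) : ℝ) ≤ ((2*⌊N⌋ : ℤ):ℝ)/(r.den:ℝ) := Int.floor_le _
          _ ≤ 2*N/(((r.den:ℤ)):ℝ) := by
              push_cast
              have hden : (0:ℝ) < (r.den:ℝ) := by exact_mod_cast r.pos
              have hnum : 2*(⌊N⌋:ℝ) ≤ 2*N := by linarith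
              gcongr
      have h2 : (((Finset.Icc (0:ℤ) ((2*⌊N⌋)/q)).card : ℕ) : ℝ) = ((((2*⌊N⌋)/q : ℤ):ℝ) + 1) := by
        have := congrArg (fun z : ℤ => (z : ℝ)) h1
        push_cast at this ⊢
        linarith
      rw [h2]; linarith
    -- contradiction arithmetic
    have hP : δ * N ≤ (2*((q:ℝ)*ε + 50*ε/δ) + 1) * (2*N/(q:ℝ) + 1) := by
      calc δ * N ≤ (S.card : ℝ) := hcard
        _ ≤ (((Finset.Icc (-E) E).card : ℕ) : ℝ) *
            (((Finset.Icc (0:ℤ) ((2*⌊N⌋)/q)).card : ℕ) : ℝ) := by exact_mod_cast hcount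
        _ ≤ (2*((q:ℝ)*ε + 50*ε/δ) + 1) * (2*N/(q:ℝ) + 1) := by
            apply mul_le_mul hc1 hc2 (by positivity) (by positivity)
    have huw : ((q:ℝ)*ε) * (2*N/(q:ℝ)) = 2*N*ε := by field_simp
    have hqε : (q:ℝ)*ε ≤ δ*N/49 := by
      have := mul_le_mul_of_nonneg_right (hqQ.trans hQle) hε.le
      calc (q:ℝ)*ε ≤ δ * N / (49*ε) * ε := this
        _ = δ*N/49 := by field_simp
    have h2Nq : 2*N/(q:ℝ) ≤ 4*N*ε := by
      rw [div_le_iff₀ hq0']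
      nlinarith
    have hcw : (100*ε/δ) * (2*N/(q:ℝ)) ≤ 4*N*ε := by
      have h5 : 100*ε/δ ≤ 1 := by rw [div_le_one hδ0]; linarith
      have h6 : (0:ℝ) ≤ 2*N/(q:ℝ) := by positivity
      nlinarith
    have hexp : (2*((q:ℝ)*ε + 50*ε/δ) + 1) * (2*N/(q:ℝ) + 1)
        = 2*(((q:ℝ)*ε) * (2*N/(q:ℝ))) + 2*((q:ℝ)*ε) + (100*ε/δ) * (2*N/(q:ℝ))
          + (2*N/(q:ℝ)) + 100*ε/δ + 1 := by ring
    rw [hexp, huw] at hP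
    have h5 : 100*ε/δ ≤ 1 := by rw [div_le_one hδ0]; linarith
    have h4Nε : 4*N*ε ≤ δ*N/25 := by nlinarith
    linarith
  -- conclude: S consists of multiples of q, so q is small
  have hden : (0:ℝ) < (r.den:ℝ) := by exact_mod_cast r.pos
  have hsub : ∀ n ∈ S, n / q ∈ Finset.Icc ((-⌊N⌋)/q) (⌊N⌋/q) := by
    intro n hn
    have hnI := Finset.mem_Icc.mp (Finset.mem_filter.mp hn).1
    rw [Finset.mem_Icc]
    constructor
    · rw [hqdef, ← floor_int_div_real _ r.den, ← floor_int_div_real _ r.den]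
      apply Int.floor_le_floor
      have hnum : ((-⌊N⌋ : ℤ):ℝ) ≤ ((n : ℤ):ℝ) := by exact_mod_cast hnI.1
      gcongr
    · rw [hqdef, ← floor_int_div_real _ r.den, ← floor_int_div_real _ r.den]
      apply Int.floor_le_floor
      have hnum : ((n : ℤ):ℝ) ≤ ((⌊N⌋ : ℤ):ℝ) := by exact_mod_cast hnI.2
      gcongr
  have hinj2 : Set.InjOn (· / q) S := by
    intro n hn n' hn' he
    have h1 := Int.ediv_mul_cancel (hdvd n hn)
    have h2 := Int.ediv_mul_cancel (hdvd n' hn')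
    simp only at he
    rw [← h1, ← h2, he]
  have hcnt := Finset.card_le_card_of_injOn _ hsub hinj2
  have hle0 : (-⌊N⌋)/q ≤ ⌊N⌋/q := by
    rw [hqdef, ← floor_int_div_real _ r.den, ← floor_int_div_real _ r.den]
    apply Int.floor_le_floor
    have hnum : ((-⌊N⌋ : ℤ):ℝ) ≤ ((⌊N⌋ : ℤ):ℝ) := by exact_mod_cast (by omega : -⌊N⌋ ≤ ⌊N⌋)
    gcongr
  have h1 : ((Finset.Icc ((-⌊N⌋)/q) (⌊N⌋/q)).card : ℤ) = ⌊N⌋/q + 1 - (-⌊N⌋)/q :=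
    Int.card_Icc_of_le _ _ (by omega)
  have hub : ((⌊N⌋/q : ℤ):ℝ) ≤ N/(q:ℝ) := by
    rw [hqdef, ← floor_int_div_real _ r.den]
    calc ((⌊((⌊N⌋:ℤ):ℝ)/(r.den:ℝ)⌋ : ℤ) : ℝ) ≤ ((⌊N⌋:ℤ):ℝ)/(r.den:ℝ) := Int.floor_le _
      _ ≤ N/(((r.den:ℤ)):ℝ) := by push_cast; gcongr
  have hlb : -(N/(q:ℝ)) - 1 ≤ (((-⌊N⌋)/q : ℤ):ℝ) := by
    rw [hqdef, ← floor_int_div_real _ r.den]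
    have h2 : ((-⌊N⌋:ℤ):ℝ)/(r.den:ℝ) - 1 < ((⌊((-⌊N⌋:ℤ):ℝ)/(r.den:ℝ)⌋ : ℤ) : ℝ) :=
      Int.sub_one_lt_floor _
    have h3 : -(N/(((r.den:ℤ)):ℝ)) ≤ ((-⌊N⌋:ℤ):ℝ)/(r.den:ℝ) := by
      push_cast
      rw [neg_div, neg_le_neg_iff]
      gcongr
    push_cast at h2 h3 ⊢
    linarith
  have hScard : (S.card:ℝ) ≤ 2*N/(q:ℝ) + 2 := by
    have hc := (Nat.cast_le (α := ℝ)).mpr hcnt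
    have h2 : (((Finset.Icc ((-⌊N⌋)/q) (⌊N⌋/q)).card : ℕ) : ℝ)
        = ((⌊N⌋/q : ℤ):ℝ) + 1 - (((-⌊N⌋)/q : ℤ):ℝ) := by
      have := congrArg (fun z : ℤ => (z : ℝ)) h1
      push_cast at this ⊢
      linarith
    rw [h2] at hc
    have : 2*N/(q:ℝ) = N/(q:ℝ) + N/(q:ℝ) := by ring
    linarith
  have hq3δ : (q:ℝ) ≤ 3/δ := by
    have hA : δ*N ≤ 2*N/(q:ℝ) + 2 := hcard.trans hScard
    have h2q : (δ*N - 2) * (q:ℝ) ≤ 2*N := by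
      have h5 : δ*N - 2 ≤ 2*N/(q:ℝ) := by linarith
      rw [le_div_iff₀ hq0'] at h5
      linarith
    rw [le_div_iff₀ hδ0]
    nlinarith
  refine ⟨a, q, hq0, ?_, ?_, ?_⟩
  · calc (q:ℝ) ≤ 3/δ := hq3δ
      _ ≤ 100/δ := by gcongr <;> norm_num
  · have hβ1 : |β| ≤ 1 := by
      calc |β| ≤ 1/(((Q:ℝ)+1)*(q:ℝ)) := hβ
        _ ≤ 1 := by
            rw [div_le_one (by positivity)]
            nlinarith [hq1', (by exact_mod_cast hQ0 : (1:ℝ) ≤ (Q:ℝ))]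
    have haq : |(a:ℝ)/(q:ℝ)| ≤ 2 := by
      have hxb : (a:ℝ)/(q:ℝ) = x - β := by rw [hβdef]; ring
      rw [hxb, abs_le]
      rw [abs_le] at hβ1
      constructor <;> linarith
    have hle2 : |(a:ℝ)| ≤ 2*(q:ℝ) := by
      rw [abs_div, abs_of_pos hq0'] at haq
      rw [div_le_iff₀ hq0'] at haq
      linarith
    calc |(a:ℝ)| ≤ 2*(q:ℝ) := hle2
      _ ≤ 2*(3/δ) := by linarith
      _ = 6/δ := by ring
      _ ≤ 100/δ := by gcongr <;> norm_num
  · have hcs : ((x : ℝ) : UnitAddCircle) - (((a:ℝ)/(q:ℝ) : ℝ) : UnitAddCircle)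
        = ((β : ℝ) : UnitAddCircle) := by
      rw [hβdef, AddCircle.coe_sub]
    rw [hcs]
    have h1q : 1/(q:ℝ) ≤ 1 := by rw [div_le_one hq0']; exact hq1'
    have h0 : (0:ℝ) ≤ 50*ε/(δ*N) := by positivity
    calc ‖((β : ℝ) : UnitAddCircle)‖ ≤ |β| := unorm_le β
      _ ≤ 50*ε/(δ*N) * (1/(q:ℝ)) := hβ2
      _ ≤ 50*ε/(δ*N) * 1 := by exact mul_le_mul_of_nonneg_left h1q h0
      _ ≤ 100 * ε / (δ * N) := by
          rw [mul_one]
          gcongr <;> norm_num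
end
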